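/- arXiv:2112.00998 — 2 statements merged into one kernel-verified Lean document; each statement's English description precedes it below -/
import Mathlib

section
/- Assume φ is a soliton family with constants ω₀, C. There exist ω₁ ≥ ω₀ and K > 0 such that for all ω > ω₁ and θ ∈ ℝ: φ_ω(0) ≠ 0, ∂_ωφ_ω(0) ≠ 0, the restriction of P₀⊥ to H_c[θ,ω] is a bijection onto P₀⊥l², its inverse Q[θ,ω] : P₀⊥l² → H_c[θ,ω] is given by Q[θ,ω]u = u + e^{iθ}( -φ_ω(0)^{-1} Ω(u, ∂_θφ[θ,ω]) + i (∂_ωφ_ω(0))^{-1} Ω(u, ∂_ωφ[θ,ω]) ) δ₀, and for all u ∈ P₀⊥l², ‖u - Q[θ,ω]u‖_{l²_1} ≤ K ω^{-1} ‖u‖_{l²_{-1}}. -/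
noncomputable section

open scoped BigOperators ENNReal
open MeasureTheory Complex Filter

/-! ## Sequence spaces and norms -/

/-- Square-summable complex sequences `ℓ²(ℤ;ℂ)`. -/
abbrev L2 := lp (fun _ : ℤ => ℂ) 2
/-- Square-summable real sequences `ℓ²(ℤ;ℝ)`. -/
abbrev L2R := lp (fun _ : ℤ => ℝ) 2
/-- Bounded real sequences `ℓ^∞(ℕ₀;ℝ)`. -/
abbrev LinfN := lp (fun _ : ℕ => ℝ) ⊤

/-- Discrete Laplacian on raw complex sequences. -/
def lapC (u : ℤ → ℂ) : ℤ → ℂ := fun x => u (x + 1) - 2 * u x + u (x - 1)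

/-- Discrete Laplacian on raw real sequences. -/
def lapR (u : ℤ → ℝ) : ℤ → ℝ := fun x => u (x + 1) - 2 * u x + u (x - 1)

/-- Exponential weight `e^{a|x|}`. -/
def wt (a : ℝ) (x : ℤ) : ℝ := Real.exp (a * |(x : ℝ)|)

/-- `ℝ≥0∞`-valued weighted `ℓ²` norm `‖u‖_{l²_a} = ‖e^{a|·|}u‖_{l²}`. -/
def el2w (a : ℝ) (u : ℤ → ℂ) : ℝ≥0∞ :=
  (∑' x : ℤ, ((‖u x‖₊ : ℝ≥0∞) * ENNReal.ofReal (wt a x)) ^ (2 : ℕ)) ^ ((1 : ℝ) / 2)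

/-- `ℝ≥0∞`-valued `ℓ²` norm. -/
def el2 (u : ℤ → ℂ) : ℝ≥0∞ := el2w 0 u

/-- `ℝ≥0∞`-valued `ℓ¹` norm. -/
def el1 (u : ℤ → ℂ) : ℝ≥0∞ := ∑' x : ℤ, (‖u x‖₊ : ℝ≥0∞)

/-- `ℝ≥0∞`-valued `ℓ^∞` norm. -/
def elinf (u : ℤ → ℂ) : ℝ≥0∞ := ⨆ x : ℤ, (‖u x‖₊ : ℝ≥0∞)

/-- `L^q` norm in time over the set `I` of an `ℝ≥0∞`-valued function. -/
def LqT (q : ℝ) (I : Set ℝ) (F : ℝ → ℝ≥0∞) : ℝ≥0∞ := (∫⁻ t in I, F t ^ q) ^ (1 / q)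

/-- `L^∞` norm in time over the set `I` of an `ℝ≥0∞`-valued function. -/
def LinfT (I : Set ℝ) (F : ℝ → ℝ≥0∞) : ℝ≥0∞ := essSup F (volume.restrict I)

/-- The `Strichartz` norm `L^∞(I,l²) ∩ L⁶(I,l^∞)` of a time-dependent sequence. -/
def StzT (I : Set ℝ) (F : ℝ → ℤ → ℂ) : ℝ≥0∞ :=
  LinfT I (fun t => el2 (F t)) + LqT 6 I (fun t => elinf (F t))

/-- The `L¹ ∩ L^∞` norm in time of a scalar function. -/
def L1LinfT (I : Set ℝ) (g : ℝ → ℝ) : ℝ≥0∞ :=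
  LqT 1 I (fun t => (‖g t‖₊ : ℝ≥0∞)) + LinfT I (fun t => (‖g t‖₊ : ℝ≥0∞))

/-! ## The discrete Laplacian and its unitary group -/

lemma memℓp_translate (k : ℤ) (u : L2) : Memℓp (fun x : ℤ => u (x + k)) 2 := by
  apply memℓp_gen
  have hs : Summable fun x : ℤ => ‖u x‖ ^ (2 : ℝ≥0∞).toReal :=
    (memℓp_gen_iff (by norm_num)).1 (lp.memℓp u)
  exact ((Equiv.addRight k).summable_iff
    (f := fun x : ℤ => ‖u x‖ ^ (2 : ℝ≥0∞).toReal)).2 hs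

lemma norm_translate (k : ℤ) (u : L2) :
    ‖(⟨fun x : ℤ => u (x + k), memℓp_translate k u⟩ : L2)‖ = ‖u‖ := by
  rw [lp.norm_eq_tsum_rpow (by norm_num), lp.norm_eq_tsum_rpow (by norm_num)]
  congr 1
  exact (Equiv.addRight k).tsum_eq (f := fun x : ℤ => ‖u x‖ ^ (2 : ℝ≥0∞).toReal)

/-- Translation `u ↦ u(· + k)` as a linear map on `ℓ²(ℤ;ℂ)`. -/
def translateLM (k : ℤ) : L2 →ₗ[ℂ] L2 where
  toFun u := ⟨fun x => u (x + k), memℓp_translate k u⟩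
  map_add' u v := by ext x; simp [lp.coeFn_add]; rfl
  map_smul' c u := by ext x; simp [lp.coeFn_smul]

/-- Translation as a continuous linear map on `ℓ²(ℤ;ℂ)`. -/
def translateCLM (k : ℤ) : L2 →L[ℂ] L2 :=
  LinearMap.mkContinuous (translateLM k) 1 (by
    intro u; rw [one_mul]; exact le_of_eq (norm_translate k u))

/-- The discrete Laplacian `(Δ_d u)(x) = u(x+1) - 2u(x) + u(x-1)` as a bounded operator
on `ℓ²(ℤ;ℂ)`. -/
def DeltaD : L2 →L[ℂ] L2 :=
  translateCLM 1 + translateCLM (-1) - 2 • ContinuousLinearMap.id ℂ L2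

lemma DeltaD_apply (u : L2) (x : ℤ) :
    DeltaD u x = u (x + 1) - 2 * u x + u (x - 1) := by
  simp [DeltaD, translateCLM, translateLM, LinearMap.mkContinuous,
    lp.coeFn_add, lp.coeFn_sub, lp.coeFn_smul, sub_eq_add_neg]
  ring_nf
  change u (1 + x) + u (-1 + x) - 2 * u x = _
  ring

/-- The Kronecker delta at `0` as an element of `ℓ²(ℤ;ℂ)`. -/
def e0C : L2 := lp.single 2 (0 : ℤ) (1 : ℂ)

lemma norm_e0C : ‖e0C‖ = 1 := by
  have := lp.norm_single (p := 2) (E := fun _ : ℤ => ℂ) (by norm_num)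
    (0 : ℤ) (1 : ℂ)
  simpa [e0C] using this

/-- The projection `P₀⊥ u = u - (u,δ₀)δ₀` as a bounded operator on `ℓ²(ℤ;ℂ)`. -/
def P0perp : L2 →L[ℂ] L2 :=
  LinearMap.mkContinuous
    { toFun := fun u => u - (u 0) • e0C
      map_add' := fun u v => by
        have h : (↑(u + v) : ∀ _ : ℤ, ℂ) 0 = u 0 + v 0 := by
          rw [lp.coeFn_add]; rfl
        show (u + v) - ((u + v : L2) 0) • e0C = (u - (u 0) • e0C) + (v - (v 0) • e0C)
        rw [h, add_smul]; abel
      map_smul' := fun c u => by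
        have h : (↑(c • u) : ∀ _ : ℤ, ℂ) 0 = c * u 0 := by
          rw [lp.coeFn_smul]; rfl
        show (c • u) - ((c • u : L2) 0) • e0C = (RingHom.id ℂ) c • (u - (u 0) • e0C)
        rw [h, RingHom.id_apply, mul_smul, ← smul_sub] }
    2 (by
      intro u
      have h2 : ‖u 0‖ ≤ ‖u‖ := lp.norm_apply_le_norm (by norm_num) u 0
      calc ‖u - (u 0) • e0C‖ ≤ ‖u‖ + ‖(u 0) • e0C‖ := norm_sub_le _ _
        _ = ‖u‖ + ‖u 0‖ * ‖e0C‖ := by rw [norm_smul]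
        _ ≤ 2 * ‖u‖ := by rw [norm_e0C]; linarith)

lemma P0perp_apply (u : L2) (x : ℤ) :
    P0perp u x = if x = 0 then 0 else u x := by
  have h : P0perp u = u - (u 0) • e0C := rfl
  rw [h, lp.coeFn_sub, lp.coeFn_smul]
  by_cases hx : x = 0 <;>
    simp [hx, e0C, lp.single_apply, Pi.sub_apply, Pi.smul_apply]

/-- `Δ₀ = P₀⊥ Δ_d P₀⊥`, the discrete Laplacian restricted to `P₀⊥ ℓ²`. -/
def Delta0 : L2 →L[ℂ] L2 := P0perp.comp (DeltaD.comp P0perp)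

/-- The unitary group `e^{itΔ_d}`. -/
def Ud (t : ℝ) : L2 →L[ℂ] L2 := NormedSpace.exp ((Complex.I * t) • DeltaD)

/-- The unitary group `e^{itΔ₀}`. -/
def U0 (t : ℝ) : L2 →L[ℂ] L2 := NormedSpace.exp ((Complex.I * t) • Delta0)

/-- Domination criterion for membership in `ℓ²`. -/
lemma memℓp_of_le (u : L2) (f : ℤ → ℂ) (h : ∀ x, ‖f x‖ ≤ ‖u x‖) : Memℓp f 2 := by
  apply memℓp_gen
  have hs : Summable fun x : ℤ => ‖u x‖ ^ (2 : ℝ≥0∞).toReal :=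
    (memℓp_gen_iff (by norm_num)).1 (lp.memℓp u)
  refine hs.of_nonneg_of_le (fun x => ?_) (fun x => ?_)
  · positivity
  · exact Real.rpow_le_rpow (norm_nonneg _) (h x) (by norm_num)

/-- The restriction `P₊` to `{x ≥ 1}`. -/
def Pplus (u : L2) : L2 :=
  ⟨fun x => if 1 ≤ x then u x else 0,
    memℓp_of_le u _ (fun x => by by_cases h : 1 ≤ x <;> simp [h])⟩

/-- The restriction `P₋` to `{x ≤ -1}`. -/
def Pminus (u : L2) : L2 :=
  ⟨fun x => if x ≤ -1 then u x else 0,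
    memℓp_of_le u _ (fun x => by by_cases h : x ≤ -1 <;> simp [h])⟩

/-- Duhamel term `∫₀ᵗ e^{i(t-s)Δ₀} P₀⊥ f(s) ds`. -/
def duhamel (f : ℝ → L2) (t : ℝ) : L2 := ∫ s in (0 : ℝ)..t, U0 (t - s) (P0perp (f s))

/-! ## Soliton families -/

/-- The Kronecker delta at `0` in `ℓ²(ℤ;ℝ)`. -/
def e0R : L2R := lp.single 2 (0 : ℤ) (1 : ℝ)

/-- `P₀⊥` on real `ℓ²`. -/
def P0R (u : L2R) : L2R := u - (u 0) • e0R

/-- A family of solitons `φ_ω`, `ω ∈ (ω₀,∞)`, as in Proposition 1.2 of the paper.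
The data is recorded through the weighted sequences `Φ ω = e^{10|·|} φ_ω ∈ ℓ²(ℤ;ℝ)`
(so that `φ_ω = e^{-10|·|} Φ ω`, the map `ω ↦ φ_ω` is twice continuously differentiable
into `l²_{10}` iff `ω ↦ Φ ω` is so into `ℓ²`, and `l²_{10}`-norm statements about `φ_ω`
are plain `ℓ²`-norm statements about `Φ ω`), together with its first and second
derivatives in `ω`.  The fields state: `ω ↦ φ_ω` is `C²` from `(ω₀,∞)` to `l²_{10}`;
`φ_ω` solves `0 = -Δ_d φ_ω + ω φ_ω - |φ_ω|⁶ φ_ω`; and the two weighted estimates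
`∑_{j=0}^{2} ω^j ‖∂_ω^j φ_ω - ∂_ω^j(ω^{1/6} δ₀)‖_{l²_{10}} ≤ C ω^{-5/6}` and
`∑_{j=0}^{2} ω^j ‖P₀⊥ ∂_ω^j φ_ω‖_{l²_{10}} ≤ C ω^{-5/6}` hold (note
`∂_ω(ω^{1/6}δ₀) = (1/6)ω^{-5/6}δ₀` and `∂_ω²(ω^{1/6}δ₀) = -(5/36)ω^{-11/6}δ₀`). -/
structure SolitonFamily (ω₀ C : ℝ) : Type where
  Φ : ℝ → L2R
  Φ' : ℝ → L2R
  Φ'' : ℝ → L2R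
  hasDeriv1 : ∀ ω ∈ Set.Ioi ω₀, HasDerivAt Φ (Φ' ω) ω
  hasDeriv2 : ∀ ω ∈ Set.Ioi ω₀, HasDerivAt Φ' (Φ'' ω) ω
  contDeriv2 : ContinuousOn Φ'' (Set.Ioi ω₀)
  eqn : ∀ ω ∈ Set.Ioi ω₀, ∀ x : ℤ,
    0 = -(lapR (fun y => wt (-10) y * Φ ω y) x) + ω * (wt (-10) x * Φ ω x)
        - |wt (-10) x * Φ ω x| ^ 6 * (wt (-10) x * Φ ω x)
  approx : ∀ ω ∈ Set.Ioi ω₀,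
      ‖Φ ω - (ω ^ ((1 : ℝ) / 6)) • e0R‖
    + ω * ‖Φ' ω - ((1 / 6 : ℝ) * ω ^ (-(5 : ℝ) / 6)) • e0R‖
    + ω ^ 2 * ‖Φ'' ω - ((-5 / 36 : ℝ) * ω ^ (-(11 : ℝ) / 6)) • e0R‖
      ≤ C * ω ^ (-(5 : ℝ) / 6)
  perp : ∀ ω ∈ Set.Ioi ω₀,
      ‖P0R (Φ ω)‖ + ω * ‖P0R (Φ' ω)‖ + ω ^ 2 * ‖P0R (Φ'' ω)‖ ≤ C * ω ^ (-(5 : ℝ) / 6)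

namespace SolitonFamily
variable {ω₀ C : ℝ} (sf : SolitonFamily ω₀ C)

/-- The soliton `φ_ω` as a raw real sequence. -/
def phiF (ω : ℝ) : ℤ → ℝ := fun x => wt (-10) x * sf.Φ ω x
/-- `∂_ω φ_ω` as a raw real sequence. -/
def dphiF (ω : ℝ) : ℤ → ℝ := fun x => wt (-10) x * sf.Φ' ω x
/-- `∂²_ω φ_ω` as a raw real sequence. -/
def d2phiF (ω : ℝ) : ℤ → ℝ := fun x => wt (-10) x * sf.Φ'' ω x
/-- `φ[θ,ω] = e^{iθ} φ_ω`. -/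
def phiC (θ ω : ℝ) : ℤ → ℂ := fun x => Complex.exp (Complex.I * θ) * (sf.phiF ω x : ℂ)
/-- `∂_θ φ[θ,ω] = i e^{iθ} φ_ω`. -/
def dthphiC (θ ω : ℝ) : ℤ → ℂ :=
  fun x => Complex.I * Complex.exp (Complex.I * θ) * (sf.phiF ω x : ℂ)
/-- `∂_ω φ[θ,ω] = e^{iθ} ∂_ω φ_ω`. -/
def dOmphiC (θ ω : ℝ) : ℤ → ℂ := fun x => Complex.exp (Complex.I * θ) * (sf.dphiF ω x : ℂ)

end SolitonFamily

/-- The real inner product `⟨u,v⟩ = Re ∑_x u(x) conj(v(x))`. -/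
def rip (u v : ℤ → ℂ) : ℝ := ∑' x : ℤ, (u x * (starRingEnd ℂ) (v x)).re

/-- The symplectic form `Ω(u,v) = ⟨iu, v⟩`. -/
def Om (u v : ℤ → ℂ) : ℝ := rip (fun x => Complex.I * u x) v

namespace SolitonFamily
variable {ω₀ C : ℝ} (sf : SolitonFamily ω₀ C)

/-- `H_c[θ,ω] = {u ∈ ℓ² : Ω(u, ∂_θφ[θ,ω]) = Ω(u, ∂_ωφ[θ,ω]) = 0}`. -/
def Hc (θ ω : ℝ) : Set L2 :=
  {v : L2 | Om (fun x => v x) (sf.dthphiC θ ω) = 0 ∧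
            Om (fun x => v x) (sf.dOmphiC θ ω) = 0}

/-- The tube `T_{ω*}(r) = {u : inf_θ ‖u - φ[θ,ω*]‖_{l²} < r}` around the soliton orbit. -/
def Tset (ωs r : ℝ) : Set L2 :=
  {u : L2 | (⨅ θ : ℝ, el2 (fun x => u x - sf.phiC θ ωs x)) < ENNReal.ofReal r}

end SolitonFamily

/-- `u` is a `C¹` solution of DNLS `i ∂_t u = -Δ_d u - |u|⁶ u` on the time set `S`,
with derivative `u'`. -/
def IsDNLS (u u' : ℝ → L2) (S : Set ℝ) : Prop :=
  ContinuousOn u' S ∧ ∀ t ∈ S, HasDerivWithinAt u (u' t) S t ∧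
    ∀ x : ℤ, Complex.I * (u' t) x
      = -(lapC (fun y => (u t) y) x) - (‖(u t) x‖ : ℂ) ^ 6 * (u t) x

/-- The modulation remainder `ξ(t) = u(t) - φ[θ(t),ω(t)]` as a raw sequence. -/
def xiF {ω₀ C : ℝ} (sf : SolitonFamily ω₀ C) (u : ℝ → L2) (θ ω : ℝ → ℝ) (t : ℝ) :
    ℤ → ℂ := fun x => u t x - sf.phiC (θ t) (ω t) x

/-- `η(t) = P₀⊥ ξ(t)` as a raw sequence. -/
def etaF {ω₀ C : ℝ} (sf : SolitonFamily ω₀ C) (u : ℝ → L2) (θ ω : ℝ → ℝ) (t : ℝ) :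
    ℤ → ℂ := fun x => if x = 0 then 0 else xiF sf u θ ω t x

/-- The scalar coefficient appearing in the inverse `Q[θ,ω]` of `P₀⊥|_{H_c[θ,ω]}`. -/
def Qcoef {ω₀ C : ℝ} (sf : SolitonFamily ω₀ C) (θ ω : ℝ) (u : L2) : ℂ :=
  Complex.exp (Complex.I * θ) *
    (((-(sf.phiF ω 0)⁻¹ * Om (fun x => u x) (sf.dthphiC θ ω) : ℝ) : ℂ)
      + Complex.I * (((sf.dphiF ω 0)⁻¹ * Om (fun x => u x) (sf.dOmphiC θ ω) : ℝ) : ℂ))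

/-- The map `Q[θ,ω] u = u + e^{iθ}(-φ_ω(0)⁻¹ Ω(u,∂_θφ) + i (∂_ωφ_ω(0))⁻¹ Ω(u,∂_ωφ)) δ₀`. -/
def Qmap {ω₀ C : ℝ} (sf : SolitonFamily ω₀ C) (θ ω : ℝ) (u : L2) : L2 :=
  u + lp.single 2 (0 : ℤ) (Qcoef sf θ ω u)

/-- The (ℝ-linear) linearized operator
`H[θ,ω]u = -Δ_d u - 4|φ[θ,ω]|⁶ u - 3|φ[θ,ω]|⁴ φ[θ,ω]² conj(u)`. -/
def Hop {ω₀ C : ℝ} (sf : SolitonFamily ω₀ C) (θ ω : ℝ) (u : ℤ → ℂ) : ℤ → ℂ :=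
  fun x => -(lapC u x) - 4 * (‖sf.phiC θ ω x‖ : ℂ) ^ 6 * u x
    - 3 * (‖sf.phiC θ ω x‖ : ℂ) ^ 4 * (sf.phiC θ ω x) ^ 2 * (starRingEnd ℂ) (u x)

/-- The soliton of the appendix (anti-continuous limit) construction:
`φ_ω = ω^{1/6}((1 + ω⁻¹ψ₀(ω⁻¹))δ₀ + ∑_{j≥1} ω^{-j} ψ_j(ω⁻¹)(δ_j + δ_{-j}))`. -/
def phiOf (ψ : ℝ → LinfN) (ω : ℝ) : ℤ → ℝ :=
  fun x => ω ^ ((1 : ℝ) / 6) *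
    (if x = 0 then 1 + ω⁻¹ * ψ ω⁻¹ 0
     else ω ^ (-(x.natAbs : ℝ)) * ψ ω⁻¹ x.natAbs)


/-! ## Auxiliary lemmas for Lemma 3.3 -/

section QAux

lemma norm_exp_I_mul_real (θ : ℝ) : ‖Complex.exp (Complex.I * θ)‖ = 1 := by
  rw [Complex.norm_exp]
  simp

lemma exp_I_mul_exp_neg (θ : ℝ) :
    Complex.exp (Complex.I * θ) * Complex.exp (-(Complex.I * θ)) = 1 := by
  rw [← Complex.exp_add]; simp

lemma conj_exp_I_mul (θ : ℝ) :
    (starRingEnd ℂ) (Complex.exp (Complex.I * θ)) = Complex.exp (-(Complex.I * θ)) := by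
  rw [← Complex.exp_conj, map_mul, Complex.conj_I, Complex.conj_ofReal, neg_mul]

lemma exp_cancel (θ : ℝ) (z : ℂ) :
    Complex.exp (Complex.I * θ) * z * Complex.exp (-(Complex.I * θ)) = z := by
  rw [mul_comm (Complex.exp _) z, mul_assoc, exp_I_mul_exp_neg, mul_one]

lemma summable_sq {E : Type*} [NormedAddCommGroup E] {f : ℤ → E} (hf : Memℓp f 2) :
    Summable fun x => ‖f x‖ ^ 2 := by
  have hs := (memℓp_gen_iff (p := 2) (by norm_num)).1 hf
  have h2 : (2 : ℝ≥0∞).toReal = ((2 : ℕ) : ℝ) := by norm_num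
  rw [h2] at hs
  simpa [Real.rpow_natCast] using hs

lemma memℓp_two_of_sq {f : ℤ → ℝ} (hf : Summable fun x => f x ^ 2) : Memℓp f 2 := by
  apply memℓp_gen
  have h2 : (2 : ℝ≥0∞).toReal = ((2 : ℕ) : ℝ) := by norm_num
  rw [h2]
  simpa [Real.rpow_natCast, Real.norm_eq_abs, _root_.sq_abs] using hf

lemma summable_mul_of_sq {f g : ℤ → ℝ} (hfn : ∀ x, 0 ≤ f x) (hgn : ∀ x, 0 ≤ g x)
    (hf : Summable fun x => f x ^ 2) (hg : Summable fun x => g x ^ 2) :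
    Summable fun x => f x * g x := by
  refine Summable.of_nonneg_of_le (fun x => mul_nonneg (hfn x) (hgn x)) (fun x => ?_)
    ((hf.add hg).div_const 2)
  have h := two_mul_le_add_sq (f x) (g x)
  have h2 : f x * g x ≤ (f x ^ 2 + g x ^ 2) / 2 := by linarith
  simpa using h2

lemma sqrt_tsum_sq_eq_norm (F : L2R) : Real.sqrt (∑' x, (F x) ^ 2) = ‖F‖ := by
  have h := lp.norm_rpow_eq_tsum (p := 2) (by norm_num) F
  have h2 : (2 : ℝ≥0∞).toReal = ((2 : ℕ) : ℝ) := by norm_num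
  rw [h2] at h
  simp only [Real.rpow_natCast, Real.norm_eq_abs, _root_.sq_abs] at h
  rw [← h, Real.sqrt_sq (norm_nonneg F)]

lemma tsum_cs {f g : ℤ → ℝ} (hfn : ∀ x, 0 ≤ f x) (hgn : ∀ x, 0 ≤ g x)
    (hf : Summable fun x => f x ^ 2) (hg : Summable fun x => g x ^ 2) :
    ∑' x, f x * g x ≤ Real.sqrt (∑' x, f x ^ 2) * Real.sqrt (∑' x, g x ^ 2) := by
  set F : L2R := ⟨f, memℓp_two_of_sq hf⟩ with hF
  set G : L2R := ⟨g, memℓp_two_of_sq hg⟩ with hG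
  have h1 : (inner ℝ F G) = ∑' x, f x * g x := by
    rw [lp.inner_eq_tsum]
    refine tsum_congr (fun x => ?_)
    show inner ℝ (f x) (g x) = f x * g x
    simp [RCLike.inner_apply, mul_comm]
  have h2 := real_inner_le_norm F G
  rw [h1] at h2
  have hFn : ‖F‖ = Real.sqrt (∑' x, f x ^ 2) := (sqrt_tsum_sq_eq_norm F).symm
  have hGn : ‖G‖ = Real.sqrt (∑' x, g x ^ 2) := (sqrt_tsum_sq_eq_norm G).symm
  rw [hFn, hGn] at h2
  exact h2

lemma abs_tsum_le_of_le {h b : ℤ → ℝ} (hb : Summable b) (hle : ∀ x, |h x| ≤ b x) :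
    |∑' x, h x| ≤ ∑' x, b x := by
  have hsn : Summable fun x => |h x| :=
    hb.of_nonneg_of_le (fun x => abs_nonneg _) hle
  have h1 : |∑' x, h x| ≤ ∑' x, |h x| := by
    simpa [Real.norm_eq_abs] using
      norm_tsum_le_tsum_norm (f := h) (by simpa [Real.norm_eq_abs] using hsn)
  exact h1.trans (Summable.tsum_le_tsum hle hsn hb)

lemma wt_pos (a : ℝ) (x : ℤ) : 0 < wt a x := Real.exp_pos _

lemma wt_zero_eq (a : ℝ) : wt a 0 = 1 := by simp [wt]

lemma wt_mono {a b : ℝ} (hab : a ≤ b) (x : ℤ) : wt a x ≤ wt b x := by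
  apply Real.exp_le_exp.2
  exact mul_le_mul_of_nonneg_right hab (abs_nonneg _)

lemma wt_le_one {a : ℝ} (ha : a ≤ 0) (x : ℤ) : wt a x ≤ 1 := by
  have := wt_mono ha x
  simpa [wt] using this

lemma wt_neg_mul (a : ℝ) (x : ℤ) : wt (-a) x * wt a x = 1 := by
  rw [wt, wt, ← Real.exp_add]
  ring_nf
  simp

/-- Splitting `Ω(u + c δ₀, w)`. -/
lemma Om_add_single (u : L2) (c : ℂ) (w : ℤ → ℂ) (hw : Summable fun x => ‖w x‖ ^ 2) :
    Om (fun x => (u + lp.single (E := fun _ : ℤ => ℂ) 2 (0 : ℤ) c) x) w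
      = Om (fun x => u x) w + (Complex.I * c * (starRingEnd ℂ) (w 0)).re := by
  set s0 : L2 := lp.single (E := fun _ : ℤ => ℂ) 2 (0 : ℤ) c with hs0
  have hs0x : ∀ x : ℤ, s0 x = if x = 0 then c else 0 := by
    intro x
    by_cases hx : x = 0
    · subst hx
      rw [hs0, lp.single_apply_self (E := fun _ : ℤ => ℂ)]
      simp
    · rw [hs0, lp.single_apply_ne (E := fun _ : ℤ => ℂ) 2 0 c hx]
      simp [hx]
  have hOm : ∀ v : ℤ → ℂ, Om v w = ∑' x, (Complex.I * v x * (starRingEnd ℂ) (w x)).re :=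
    fun v => rfl
  simp only [hOm]
  have hcoe : ∀ x : ℤ, (u + s0) x = u x + s0 x := by
    intro x; rw [lp.coeFn_add]; rfl
  have hsum1 : Summable fun x : ℤ => (Complex.I * u x * (starRingEnd ℂ) (w x)).re := by
    apply Summable.of_norm_bounded
      (summable_mul_of_sq (fun x => norm_nonneg (u x)) (fun x => norm_nonneg (w x))
        (summable_sq (lp.memℓp u)) hw)
    intro x
    calc ‖(Complex.I * u x * (starRingEnd ℂ) (w x)).re‖
        ≤ ‖Complex.I * u x * (starRingEnd ℂ) (w x)‖ := by
          simpa [Real.norm_eq_abs] using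
            Complex.abs_re_le_norm (Complex.I * u x * (starRingEnd ℂ) (w x))
      _ = ‖u x‖ * ‖w x‖ := by simp
  have hsum2 : Summable fun x : ℤ => (Complex.I * s0 x * (starRingEnd ℂ) (w x)).re := by
    apply summable_of_ne_finset_zero (s := ({0} : Finset ℤ))
    intro x hx
    simp only [Finset.mem_singleton] at hx
    rw [hs0x x]
    simp [hx]
  have hsplit : (fun x : ℤ => (Complex.I * (u + s0) x * (starRingEnd ℂ) (w x)).re)
      = fun x => (Complex.I * u x * (starRingEnd ℂ) (w x)).re
          + (Complex.I * s0 x * (starRingEnd ℂ) (w x)).re := by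
    funext x
    rw [hcoe x, mul_add, add_mul, Complex.add_re]
  rw [hsplit, Summable.tsum_add hsum1 hsum2]
  congr 1
  rw [tsum_eq_single (0 : ℤ) (fun b hb => by rw [hs0x b]; simp [hb])]
  rw [hs0x 0]
  simp

lemma pair_re_dth (θ φ0 : ℝ) (z : ℂ) :
    (Complex.I * z * (starRingEnd ℂ) (Complex.I * Complex.exp (Complex.I * θ) * (φ0 : ℂ))).re
      = (z * Complex.exp (-(Complex.I * θ))).re * φ0 := by
  rw [map_mul, map_mul, Complex.conj_I, Complex.conj_ofReal, conj_exp_I_mul]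
  have h1 : Complex.I * z * (-Complex.I * Complex.exp (-(Complex.I * θ)) * (φ0 : ℂ))
      = (z * Complex.exp (-(Complex.I * θ))) * (φ0 : ℂ) * (Complex.I * -Complex.I) := by ring
  have h2 : Complex.I * -Complex.I = 1 := by
    rw [mul_neg, Complex.I_mul_I, neg_neg]
  rw [h1, h2, mul_one]
  simp [Complex.mul_re]

lemma pair_re_dOm (θ φ0 : ℝ) (z : ℂ) :
    (Complex.I * z * (starRingEnd ℂ) (Complex.exp (Complex.I * θ) * (φ0 : ℂ))).re
      = -(z * Complex.exp (-(Complex.I * θ))).im * φ0 := by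
  rw [map_mul, Complex.conj_ofReal, conj_exp_I_mul]
  have h1 : Complex.I * z * (Complex.exp (-(Complex.I * θ)) * (φ0 : ℂ))
      = Complex.I * (z * Complex.exp (-(Complex.I * θ))) * (φ0 : ℂ) := by ring
  rw [h1]
  simp [Complex.mul_re, Complex.mul_im]

lemma re_of_mk (a b : ℝ) : (((a : ℝ) : ℂ) + Complex.I * ((b : ℝ) : ℂ)).re = a := by simp

lemma im_of_mk (a b : ℝ) : (((a : ℝ) : ℂ) + Complex.I * ((b : ℝ) : ℂ)).im = b := by simp

lemma P0R_apply_ne (F : L2R) {x : ℤ} (hx : x ≠ 0) : P0R F x = F x := by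
  rw [P0R, lp.coeFn_sub, Pi.sub_apply, lp.coeFn_smul, Pi.smul_apply, e0R,
    lp.single_apply_ne 2 0 _ hx]
  simp

namespace SolitonFamily
variable {ω₀ C : ℝ} (sf : SolitonFamily ω₀ C)

lemma norm_dthphiC (θ ω : ℝ) (x : ℤ) :
    ‖sf.dthphiC θ ω x‖ = wt (-10) x * |sf.Φ ω x| := by
  rw [SolitonFamily.dthphiC, norm_mul, norm_mul, Complex.norm_I, norm_exp_I_mul_real,
    one_mul, one_mul, Complex.norm_real, Real.norm_eq_abs, SolitonFamily.phiF, abs_mul,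
    abs_of_pos (wt_pos _ _)]

lemma norm_dOmphiC (θ ω : ℝ) (x : ℤ) :
    ‖sf.dOmphiC θ ω x‖ = wt (-10) x * |sf.Φ' ω x| := by
  rw [SolitonFamily.dOmphiC, norm_mul, norm_exp_I_mul_real, one_mul, Complex.norm_real,
    Real.norm_eq_abs, SolitonFamily.dphiF, abs_mul, abs_of_pos (wt_pos _ _)]

/-- Weighted Cauchy-Schwarz bound for `Ω(u,w)` when `u(0)=0` and `w` is dominated
off `0` by `e^{-|x|}G`. -/
lemma Om_bound (u : L2) (hu0 : u 0 = 0) (w : ℤ → ℂ) (G : L2R)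
    (hG : ∀ x : ℤ, x ≠ 0 → ‖w x‖ ≤ wt (-1) x * ‖G x‖) :
    |Om (fun x => u x) w| ≤
      Real.sqrt (∑' x : ℤ, (‖u x‖ * wt (-1) x) ^ 2) * ‖G‖ := by
  set f : ℤ → ℝ := fun x => ‖u x‖ * wt (-1) x with hfdef
  set g : ℤ → ℝ := fun x => ‖G x‖ with hgdef
  have hfn : ∀ x, 0 ≤ f x := fun x => mul_nonneg (norm_nonneg _) (wt_pos _ _).le
  have hgn : ∀ x, 0 ≤ g x := fun x => norm_nonneg _
  have hf2 : Summable fun x => f x ^ 2 := by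
    refine Summable.of_nonneg_of_le (fun x => by positivity) (fun x => ?_)
      (summable_sq (lp.memℓp u))
    rw [hfdef]
    have h1 : ‖u x‖ * wt (-1) x ≤ ‖u x‖ * 1 :=
      mul_le_mul_of_nonneg_left (wt_le_one (by norm_num) x) (norm_nonneg _)
    rw [mul_one] at h1
    exact pow_le_pow_left₀ (mul_nonneg (norm_nonneg _) (wt_pos _ _).le) h1 2
  have hg2 : Summable fun x => g x ^ 2 := summable_sq (lp.memℓp G)
  have hfg : Summable fun x => f x * g x := summable_mul_of_sq hfn hgn hf2 hg2
  have hle : ∀ x : ℤ, |(Complex.I * u x * (starRingEnd ℂ) (w x)).re| ≤ f x * g x := by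
    intro x
    by_cases hx : x = 0
    · subst hx
      rw [hu0]
      simpa using mul_nonneg (hfn 0) (hgn 0)
    · calc |(Complex.I * u x * (starRingEnd ℂ) (w x)).re|
          ≤ ‖Complex.I * u x * (starRingEnd ℂ) (w x)‖ := by
            simpa [Real.norm_eq_abs] using
              Complex.abs_re_le_norm (Complex.I * u x * (starRingEnd ℂ) (w x))
        _ = ‖u x‖ * ‖w x‖ := by simp
        _ ≤ ‖u x‖ * (wt (-1) x * ‖G x‖) :=
            mul_le_mul_of_nonneg_left (hG x hx) (norm_nonneg _)
        _ = f x * g x := by rw [hfdef, hgdef]; ring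
  have h1 : |Om (fun x => u x) w| ≤ ∑' x, f x * g x := abs_tsum_le_of_le hfg hle
  have h2 := tsum_cs hfn hgn hf2 hg2
  have h3 : Real.sqrt (∑' x, g x ^ 2) = ‖G‖ := by
    rw [hgdef]
    simp only [Real.norm_eq_abs, _root_.sq_abs]
    exact sqrt_tsum_sq_eq_norm G
  rw [h3] at h2
  exact h1.trans h2

end SolitonFamily

lemma single_coe (c : ℂ) (x : ℤ) :
    (lp.single (E := fun _ : ℤ => ℂ) 2 (0 : ℤ) c) x = if x = 0 then c else 0 := by
  by_cases hx : x = 0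
  · subst hx
    rw [lp.single_apply_self (E := fun _ : ℤ => ℂ)]
    simp
  · rw [lp.single_apply_ne (E := fun _ : ℤ => ℂ) 2 0 c hx]
    simp [hx]

lemma Qmap_coe {ω₀ C : ℝ} (sf : SolitonFamily ω₀ C) (θ ω : ℝ) (u : L2) (x : ℤ) :
    (Qmap sf θ ω u) x = u x + if x = 0 then Qcoef sf θ ω u else 0 := by
  have h : (Qmap sf θ ω u) x
      = u x + (lp.single (E := fun _ : ℤ => ℂ) 2 (0 : ℤ) (Qcoef sf θ ω u)) x := by
    rw [Qmap, lp.coeFn_add]; rfl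
  rw [h, single_coe]

end QAux

set_option maxHeartbeats 2000000 in
/-- **Lemma 3.3**: for large `ω`, `P₀⊥|_{H_c[θ,ω]}` is a bijection onto
`P₀⊥l² = {u : u(0) = 0}`, its inverse is given by the explicit map `Q[θ,ω]`, and
`‖u - Q[θ,ω]u‖_{l²_1} ≤ K ω⁻¹ ‖u‖_{l²_{-1}}`. -/
theorem Q_inverse_lemma {ω₀ C : ℝ} (sf : SolitonFamily ω₀ C) :
    ∃ ω₁ K : ℝ, ω₀ ≤ ω₁ ∧ 0 < K ∧
      ∀ ω θ : ℝ, ω₁ < ω →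
        sf.phiF ω 0 ≠ 0 ∧
        sf.dphiF ω 0 ≠ 0 ∧
        Set.BijOn (fun u => P0perp u) (sf.Hc θ ω) {u : L2 | u 0 = 0} ∧
        ∀ u : L2, u 0 = 0 →
          Qmap sf θ ω u ∈ sf.Hc θ ω ∧
          P0perp (Qmap sf θ ω u) = u ∧
          (∀ v ∈ sf.Hc θ ω, P0perp v = u → v = Qmap sf θ ω u) ∧
          el2w 1 (fun x => u x - Qmap sf θ ω u x)
            ≤ ENNReal.ofReal (K * ω⁻¹) * el2w (-1) (fun x => u x) := by
  refine ⟨max ω₀ (1 + 12 * |C|), 14 * |C| + 1, le_max_left _ _, by positivity, ?_⟩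
  intro ω θ hω
  have hωIoi : ω ∈ Set.Ioi ω₀ := Set.mem_Ioi.2 (lt_of_le_of_lt (le_max_left _ _) hω)
  have hω1 : 1 + 12 * |C| < ω := lt_of_le_of_lt (le_max_right _ _) hω
  have hωpos : 0 < ω := by nlinarith [abs_nonneg C]
  have happrox := sf.approx ω hωIoi
  have hperp := sf.perp ω hωIoi
  set P : ℝ := ω ^ (-(5 : ℝ) / 6) with hPdef
  have hppos : 0 < P := Real.rpow_pos_of_pos hωpos _
  have hpω : ω ^ ((1 : ℝ) / 6) = P * ω := by
    rw [hPdef, show ((1 : ℝ) / 6) = (-(5 : ℝ) / 6) + 1 by norm_num, Real.rpow_add hωpos,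
      Real.rpow_one]
  rw [hpω] at happrox
  have hCp : C * P ≤ |C| * P := mul_le_mul_of_nonneg_right (le_abs_self C) hppos.le
  have hA : ‖sf.Φ ω - (P * ω) • e0R‖ ≤ |C| * P := by
    have h1 : 0 ≤ ω * ‖sf.Φ' ω - ((1 / 6 : ℝ) * P) • e0R‖ := by positivity
    have h2 : 0 ≤ ω ^ 2 * ‖sf.Φ'' ω - ((-5 / 36 : ℝ) * ω ^ (-(11 : ℝ) / 6)) • e0R‖ := by
      positivity
    linarith
  have hB : ω * ‖sf.Φ' ω - ((1 / 6 : ℝ) * P) • e0R‖ ≤ |C| * P := by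
    have h1 : 0 ≤ ‖sf.Φ ω - (P * ω) • e0R‖ := norm_nonneg _
    have h2 : 0 ≤ ω ^ 2 * ‖sf.Φ'' ω - ((-5 / 36 : ℝ) * ω ^ (-(11 : ℝ) / 6)) • e0R‖ := by
      positivity
    linarith
  have hB' : ‖sf.Φ' ω - ((1 / 6 : ℝ) * P) • e0R‖ ≤ |C| * P / ω := by
    rw [le_div_iff₀ hωpos]
    calc ‖sf.Φ' ω - ((1 / 6 : ℝ) * P) • e0R‖ * ω
        = ω * ‖sf.Φ' ω - ((1 / 6 : ℝ) * P) • e0R‖ := by ring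
      _ ≤ |C| * P := hB
  have hcoord : ∀ (F : L2R) (r : ℝ), |F 0 - r| ≤ ‖F - r • e0R‖ := by
    intro F r
    have h := lp.norm_apply_le_norm (p := 2) (by norm_num) (F - r • e0R) 0
    have hco : (F - r • e0R) 0 = F 0 - r := by
      rw [lp.coeFn_sub, Pi.sub_apply, lp.coeFn_smul, Pi.smul_apply, e0R,
        lp.single_apply_self (E := fun _ : ℤ => ℝ)]
      simp
    rw [hco, Real.norm_eq_abs] at h
    exact h
  have hΦ0 : |sf.Φ ω 0 - P * ω| ≤ |C| * P := le_trans (hcoord _ _) hA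
  have hΦ'0 : |sf.Φ' ω 0 - 1 / 6 * P| ≤ |C| * P / ω := le_trans (hcoord _ _) hB'
  have hphiF0 : sf.phiF ω 0 = sf.Φ ω 0 := by
    simp [SolitonFamily.phiF, wt_zero_eq]
  have hdphiF0 : sf.dphiF ω 0 = sf.Φ' ω 0 := by
    simp [SolitonFamily.dphiF, wt_zero_eq]
  have hCω : |C| ≤ ω / 12 := by linarith
  have hCP2 : |C| * P ≤ ω / 12 * P := mul_le_mul_of_nonneg_right hCω hppos.le
  have hφ0 : P * ω / 2 ≤ sf.phiF ω 0 := by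
    rw [hphiF0]
    have h1 := (abs_le.1 hΦ0).1
    nlinarith [mul_nonneg hppos.le hωpos.le]
  have hφ0pos : 0 < sf.phiF ω 0 := lt_of_lt_of_le (by positivity) hφ0
  have hCP3 : |C| * P / ω ≤ P / 12 := by
    rw [div_le_iff₀ hωpos]
    nlinarith [hCP2]
  have hφ'0 : P / 12 ≤ sf.dphiF ω 0 := by
    rw [hdphiF0]
    have h1 := (abs_le.1 hΦ'0).1
    linarith
  have hφ'0pos : 0 < sf.dphiF ω 0 := lt_of_lt_of_le (by positivity) hφ'0
  -- summability of the pairing sequences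
  have hwdth : Summable fun x => ‖sf.dthphiC θ ω x‖ ^ 2 := by
    refine Summable.of_nonneg_of_le (fun x => by positivity) (fun x => ?_)
      (summable_sq (lp.memℓp (sf.Φ ω)))
    rw [sf.norm_dthphiC]
    have h1 : wt (-10) x * |sf.Φ ω x| ≤ |sf.Φ ω x| := by
      have := mul_le_mul_of_nonneg_right (wt_le_one (by norm_num : (-10 : ℝ) ≤ 0) x)
        (abs_nonneg (sf.Φ ω x))
      simpa using this
    calc (wt (-10) x * |sf.Φ ω x|) ^ 2 ≤ |sf.Φ ω x| ^ 2 :=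
          pow_le_pow_left₀ (mul_nonneg (wt_pos _ _).le (abs_nonneg _)) h1 2
      _ = ‖sf.Φ ω x‖ ^ 2 := by rw [Real.norm_eq_abs]
  have hwdOm : Summable fun x => ‖sf.dOmphiC θ ω x‖ ^ 2 := by
    refine Summable.of_nonneg_of_le (fun x => by positivity) (fun x => ?_)
      (summable_sq (lp.memℓp (sf.Φ' ω)))
    rw [sf.norm_dOmphiC]
    have h1 : wt (-10) x * |sf.Φ' ω x| ≤ |sf.Φ' ω x| := by
      have := mul_le_mul_of_nonneg_right (wt_le_one (by norm_num : (-10 : ℝ) ≤ 0) x)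
        (abs_nonneg (sf.Φ' ω x))
      simpa using this
    calc (wt (-10) x * |sf.Φ' ω x|) ^ 2 ≤ |sf.Φ' ω x| ^ 2 :=
          pow_le_pow_left₀ (mul_nonneg (wt_pos _ _).le (abs_nonneg _)) h1 2
      _ = ‖sf.Φ' ω x‖ ^ 2 := by rw [Real.norm_eq_abs]
  have hperp1 : ‖P0R (sf.Φ ω)‖ ≤ |C| * P := by
    have h1 : 0 ≤ ω * ‖P0R (sf.Φ' ω)‖ := by positivity
    have h2 : 0 ≤ ω ^ 2 * ‖P0R (sf.Φ'' ω)‖ := by positivity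
    linarith
  have hperp2 : ‖P0R (sf.Φ' ω)‖ ≤ |C| * P / ω := by
    rw [le_div_iff₀ hωpos, mul_comm]
    have h1 : 0 ≤ ‖P0R (sf.Φ ω)‖ := norm_nonneg _
    have h2 : 0 ≤ ω ^ 2 * ‖P0R (sf.Φ'' ω)‖ := by positivity
    linarith
  have hGdth : ∀ x : ℤ, x ≠ 0 → ‖sf.dthphiC θ ω x‖ ≤ wt (-1) x * ‖P0R (sf.Φ ω) x‖ := by
    intro x hx
    rw [sf.norm_dthphiC, P0R_apply_ne _ hx, Real.norm_eq_abs]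
    exact mul_le_mul_of_nonneg_right (wt_mono (by norm_num) x) (abs_nonneg _)
  have hGdOm : ∀ x : ℤ, x ≠ 0 → ‖sf.dOmphiC θ ω x‖ ≤ wt (-1) x * ‖P0R (sf.Φ' ω) x‖ := by
    intro x hx
    rw [sf.norm_dOmphiC, P0R_apply_ne _ hx, Real.norm_eq_abs]
    exact mul_le_mul_of_nonneg_right (wt_mono (by norm_num) x) (abs_nonneg _)
  have hd0 : sf.dthphiC θ ω 0
      = Complex.I * Complex.exp (Complex.I * θ) * ((sf.phiF ω 0 : ℝ) : ℂ) := rfl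
  have hd0' : sf.dOmphiC θ ω 0
      = Complex.exp (Complex.I * θ) * ((sf.dphiF ω 0 : ℝ) : ℂ) := rfl
  have main : ∀ u : L2, u 0 = 0 →
      Qmap sf θ ω u ∈ sf.Hc θ ω ∧ P0perp (Qmap sf θ ω u) = u ∧
      (∀ v ∈ sf.Hc θ ω, P0perp v = u → v = Qmap sf θ ω u) ∧
      el2w 1 (fun x => u x - Qmap sf θ ω u x)
        ≤ ENNReal.ofReal ((14 * |C| + 1) * ω⁻¹) * el2w (-1) (fun x => u x) := by
    intro u hu0
    have hQc : Qcoef sf θ ω u = Complex.exp (Complex.I * θ) *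
        ((((-(sf.phiF ω 0)⁻¹ * Om (fun x => u x) (sf.dthphiC θ ω) : ℝ)) : ℂ)
          + Complex.I * ((((sf.dphiF ω 0)⁻¹ * Om (fun x => u x) (sf.dOmphiC θ ω) : ℝ)) : ℂ)) :=
      rfl
    have hmem1 : Om (fun x => (Qmap sf θ ω u) x) (sf.dthphiC θ ω) = 0 := by
      have hq : Om (fun x => (Qmap sf θ ω u) x) (sf.dthphiC θ ω)
          = Om (fun x => (u + lp.single (E := fun _ : ℤ => ℂ) 2 (0 : ℤ)
              (Qcoef sf θ ω u)) x) (sf.dthphiC θ ω) := rfl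
      rw [hq, Om_add_single u (Qcoef sf θ ω u) (sf.dthphiC θ ω) hwdth, hd0, pair_re_dth,
        hQc, exp_cancel, re_of_mk]
      field_simp
      ring
    have hmem2 : Om (fun x => (Qmap sf θ ω u) x) (sf.dOmphiC θ ω) = 0 := by
      have hq : Om (fun x => (Qmap sf θ ω u) x) (sf.dOmphiC θ ω)
          = Om (fun x => (u + lp.single (E := fun _ : ℤ => ℂ) 2 (0 : ℤ)
              (Qcoef sf θ ω u)) x) (sf.dOmphiC θ ω) := rfl
      rw [hq, Om_add_single u (Qcoef sf θ ω u) (sf.dOmphiC θ ω) hwdOm, hd0', pair_re_dOm,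
        hQc, exp_cancel, im_of_mk]
      field_simp
      ring
    have hPQ : P0perp (Qmap sf θ ω u) = u := by
      ext x
      rw [P0perp_apply]
      by_cases hx : x = 0
      · subst hx; simp [hu0]
      · rw [if_neg hx, Qmap_coe, if_neg hx, add_zero]
    have huniq : ∀ v ∈ sf.Hc θ ω, P0perp v = u → v = Qmap sf θ ω u := by
      intro v hv hPv
      have hux : ∀ x : ℤ, u x = if x = 0 then 0 else v x := by
        intro x; rw [← hPv, P0perp_apply]
      have hvx : ∀ x : ℤ, v x
          = (u + lp.single (E := fun _ : ℤ => ℂ) 2 (0 : ℤ) (v 0)) x := by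
        intro x
        have hadd : (u + lp.single (E := fun _ : ℤ => ℂ) 2 (0 : ℤ) (v 0)) x
            = u x + (lp.single (E := fun _ : ℤ => ℂ) 2 (0 : ℤ) (v 0)) x := by
          rw [lp.coeFn_add]; rfl
        rw [hadd, single_coe, hux x]
        by_cases hx : x = 0
        · simp [hx]
        · simp [hx]
      have hv1 : Om (fun x => v x) (sf.dthphiC θ ω) = 0 := hv.1
      have hv2 : Om (fun x => v x) (sf.dOmphiC θ ω) = 0 := hv.2
      rw [show (fun x : ℤ => v x)
            = (fun x : ℤ => (u + lp.single (E := fun _ : ℤ => ℂ) 2 (0 : ℤ) (v 0)) x)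
          from funext hvx] at hv1 hv2
      rw [Om_add_single u (v 0) (sf.dthphiC θ ω) hwdth, hd0, pair_re_dth] at hv1
      rw [Om_add_single u (v 0) (sf.dOmphiC θ ω) hwdOm, hd0', pair_re_dOm] at hv2
      have hre : (v 0 * Complex.exp (-(Complex.I * θ))).re
          = -(sf.phiF ω 0)⁻¹ * Om (fun x => u x) (sf.dthphiC θ ω) := by
        have h1 : (v 0 * Complex.exp (-(Complex.I * θ))).re * sf.phiF ω 0
            = -(Om (fun x => u x) (sf.dthphiC θ ω)) := by linarith
        have h2 : (v 0 * Complex.exp (-(Complex.I * θ))).re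
            = -(Om (fun x => u x) (sf.dthphiC θ ω)) / sf.phiF ω 0 := by
          rw [eq_div_iff (ne_of_gt hφ0pos)]; exact h1
        rw [h2]; ring
      have him : (v 0 * Complex.exp (-(Complex.I * θ))).im
          = (sf.dphiF ω 0)⁻¹ * Om (fun x => u x) (sf.dOmphiC θ ω) := by
        have h1 : (v 0 * Complex.exp (-(Complex.I * θ))).im * sf.dphiF ω 0
            = Om (fun x => u x) (sf.dOmphiC θ ω) := by linarith
        have h2 : (v 0 * Complex.exp (-(Complex.I * θ))).im
            = Om (fun x => u x) (sf.dOmphiC θ ω) / sf.dphiF ω 0 := by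
          rw [eq_div_iff (ne_of_gt hφ'0pos)]; exact h1
        rw [h2]; ring
      have hv0 : v 0 = Qcoef sf θ ω u := by
        rw [hQc, ← hre, ← him]
        have hz : ((((v 0 * Complex.exp (-(Complex.I * θ))).re : ℝ) : ℂ)
            + Complex.I * (((v 0 * Complex.exp (-(Complex.I * θ))).im : ℝ) : ℂ))
            = v 0 * Complex.exp (-(Complex.I * θ)) := by
          exact Complex.ext (by simp) (by simp)
        rw [hz]
        linear_combination (-(v 0)) * exp_I_mul_exp_neg θ
      ext x
      rw [hvx x, hv0]
      have : Qmap sf θ ω u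
          = u + lp.single (E := fun _ : ℤ => ℂ) 2 (0 : ℤ) (Qcoef sf θ ω u) := rfl
      rw [this]
    -- the weighted estimate
    have hsumu : Summable fun x : ℤ => (‖u x‖ * wt (-1) x) ^ 2 := by
      refine Summable.of_nonneg_of_le (fun x => by positivity) (fun x => ?_)
        (summable_sq (lp.memℓp u))
      have h1 : ‖u x‖ * wt (-1) x ≤ ‖u x‖ * 1 :=
        mul_le_mul_of_nonneg_left (wt_le_one (by norm_num) x) (norm_nonneg _)
      rw [mul_one] at h1
      exact pow_le_pow_left₀ (mul_nonneg (norm_nonneg _) (wt_pos _ _).le) h1 2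
    set S := Real.sqrt (∑' x : ℤ, (‖u x‖ * wt (-1) x) ^ 2) with hS
    have hSnn : 0 ≤ S := Real.sqrt_nonneg _
    have hOm1 : |Om (fun x => u x) (sf.dthphiC θ ω)| ≤ S * (|C| * P) := by
      have h := SolitonFamily.Om_bound u hu0 (sf.dthphiC θ ω) (P0R (sf.Φ ω)) hGdth
      rw [← hS] at h
      exact h.trans (mul_le_mul_of_nonneg_left hperp1 hSnn)
    have hOm2 : |Om (fun x => u x) (sf.dOmphiC θ ω)| ≤ S * (|C| * P / ω) := by
      have h := SolitonFamily.Om_bound u hu0 (sf.dOmphiC θ ω) (P0R (sf.Φ' ω)) hGdOm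
      rw [← hS] at h
      exact h.trans (mul_le_mul_of_nonneg_left hperp2 hSnn)
    have hinv1 : (sf.phiF ω 0)⁻¹ ≤ 2 * (P * ω)⁻¹ := by
      have h := inv_anti₀ (show (0 : ℝ) < P * ω / 2 by positivity) hφ0
      rw [inv_div, div_eq_mul_inv] at h
      exact h
    have hinv2 : (sf.dphiF ω 0)⁻¹ ≤ 12 * P⁻¹ := by
      have h := inv_anti₀ (show (0 : ℝ) < P / 12 by positivity) hφ'0
      rw [inv_div, div_eq_mul_inv] at h
      exact h
    have habs_a : |(-(sf.phiF ω 0)⁻¹ * Om (fun x => u x) (sf.dthphiC θ ω))|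
        ≤ 2 * |C| * ω⁻¹ * S := by
      rw [abs_mul, abs_neg, abs_inv, abs_of_pos hφ0pos]
      calc (sf.phiF ω 0)⁻¹ * |Om (fun x => u x) (sf.dthphiC θ ω)|
          ≤ (2 * (P * ω)⁻¹) * (S * (|C| * P)) :=
            mul_le_mul hinv1 hOm1 (abs_nonneg _) (by positivity)
        _ = 2 * |C| * ω⁻¹ * S * (P * P⁻¹) := by rw [mul_inv]; ring
        _ = 2 * |C| * ω⁻¹ * S := by rw [mul_inv_cancel₀ (ne_of_gt hppos), mul_one]
    have habs_b : |((sf.dphiF ω 0)⁻¹ * Om (fun x => u x) (sf.dOmphiC θ ω))|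
        ≤ 12 * |C| * ω⁻¹ * S := by
      rw [abs_mul, abs_inv, abs_of_pos hφ'0pos]
      calc (sf.dphiF ω 0)⁻¹ * |Om (fun x => u x) (sf.dOmphiC θ ω)|
          ≤ (12 * P⁻¹) * (S * (|C| * P / ω)) :=
            mul_le_mul hinv2 hOm2 (abs_nonneg _) (by positivity)
        _ = 12 * |C| * ω⁻¹ * S * (P * P⁻¹) := by rw [div_eq_mul_inv]; ring
        _ = 12 * |C| * ω⁻¹ * S := by rw [mul_inv_cancel₀ (ne_of_gt hppos), mul_one]
    have hnormQc : ‖Qcoef sf θ ω u‖ ≤ (14 * |C| + 1) * ω⁻¹ * S := by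
      rw [hQc, norm_mul, norm_exp_I_mul_real, one_mul]
      have h2 : 0 ≤ ω⁻¹ * S := mul_nonneg (inv_nonneg.2 hωpos.le) hSnn
      calc ‖_ + _‖
          ≤ ‖(((-(sf.phiF ω 0)⁻¹ * Om (fun x => u x) (sf.dthphiC θ ω) : ℝ)) : ℂ)‖
            + ‖Complex.I * ((((sf.dphiF ω 0)⁻¹ * Om (fun x => u x) (sf.dOmphiC θ ω) : ℝ)) : ℂ)‖ :=
            norm_add_le _ _
        _ = |(-(sf.phiF ω 0)⁻¹ * Om (fun x => u x) (sf.dthphiC θ ω))|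
            + |((sf.dphiF ω 0)⁻¹ * Om (fun x => u x) (sf.dOmphiC θ ω))| := by
            rw [norm_mul, Complex.norm_I, one_mul, Complex.norm_real, Complex.norm_real,
              Real.norm_eq_abs, Real.norm_eq_abs]
        _ ≤ 2 * |C| * ω⁻¹ * S + 12 * |C| * ω⁻¹ * S := add_le_add habs_a habs_b
        _ ≤ (14 * |C| + 1) * ω⁻¹ * S := by nlinarith [h2]
    have hel2 : el2w (-1) (fun x => u x) = ENNReal.ofReal S := by
      show (∑' x : ℤ, ((‖u x‖₊ : ℝ≥0∞) * ENNReal.ofReal (wt (-1) x)) ^ (2 : ℕ))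
          ^ ((1 : ℝ) / 2) = ENNReal.ofReal S
      have hterm : ∀ x : ℤ, ((‖u x‖₊ : ℝ≥0∞) * ENNReal.ofReal (wt (-1) x)) ^ (2 : ℕ)
          = ENNReal.ofReal ((‖u x‖ * wt (-1) x) ^ 2) := by
        intro x
        rw [← ENNReal.ofReal_coe_nnreal, coe_nnnorm, ← ENNReal.ofReal_mul (norm_nonneg _),
          ← ENNReal.ofReal_pow (mul_nonneg (norm_nonneg _) (wt_pos _ _).le)]
      rw [tsum_congr hterm, ← ENNReal.ofReal_tsum_of_nonneg (fun x => by positivity) hsumu,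
        ENNReal.ofReal_rpow_of_nonneg (tsum_nonneg (fun x => by positivity)) (by norm_num),
        hS, Real.sqrt_eq_rpow]
    have hLHS : el2w 1 (fun x => u x - Qmap sf θ ω u x) = ENNReal.ofReal ‖Qcoef sf θ ω u‖ := by
      have hco : ∀ x : ℤ, u x - Qmap sf θ ω u x = if x = 0 then -(Qcoef sf θ ω u) else 0 := by
        intro x
        rw [Qmap_coe]
        by_cases hx : x = 0 <;> simp [hx]
      show (∑' x : ℤ, ((‖u x - Qmap sf θ ω u x‖₊ : ℝ≥0∞) * ENNReal.ofReal (wt 1 x)) ^ (2 : ℕ))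
          ^ ((1 : ℝ) / 2) = ENNReal.ofReal ‖Qcoef sf θ ω u‖
      rw [tsum_eq_single (0 : ℤ) (fun b hb => by rw [hco b, if_neg hb]; simp)]
      rw [hco 0, if_pos rfl, wt_zero_eq]
      simp only [nnnorm_neg, ENNReal.ofReal_one, mul_one]
      rw [← ENNReal.rpow_natCast, ← ENNReal.rpow_mul]
      norm_num
      rfl
    have hfinal : el2w 1 (fun x => u x - Qmap sf θ ω u x)
        ≤ ENNReal.ofReal ((14 * |C| + 1) * ω⁻¹) * el2w (-1) (fun x => u x) := by
      rw [hLHS, hel2, ← ENNReal.ofReal_mul (by positivity)]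
      exact ENNReal.ofReal_le_ofReal hnormQc
    exact ⟨⟨hmem1, hmem2⟩, hPQ, huniq, hfinal⟩
  have hmapsto : Set.MapsTo (fun u => P0perp u) (sf.Hc θ ω) {u : L2 | u 0 = 0} := by
    intro v _
    simp only [Set.mem_setOf_eq]
    rw [P0perp_apply]
    simp
  refine ⟨ne_of_gt hφ0pos, ne_of_gt hφ'0pos, ⟨hmapsto, ?_, ?_⟩, main⟩
  · intro v1 h1 v2 h2 heq
    have h0 : (P0perp v1) 0 = 0 := by rw [P0perp_apply]; simp
    have e1 := (main (P0perp v1) h0).2.2.1 v1 h1 rfl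
    have e2 := (main (P0perp v1) h0).2.2.1 v2 h2 heq.symm
    rw [e1, e2]
  · intro z hz
    exact ⟨Qmap sf θ ω z, (main z hz).1, (main z hz).2.1⟩


end
end

section
/- Let φ_ω be the soliton of the appendix construction, φ_ω = ω^{1/6}( (1 + ω^{-1}ψ₀(ω^{-1}))δ₀ + Σ_{j≥1} ω^{-j}ψ_j(ω^{-1})(δ_j + δ_{-j}) ), where ψ : (-ε,ε) → l^∞(ℕ₀;ℝ) is real-analytic with ψ₀(0)=1/3 and ψ_j(0)=1 for j ≥ 1 and the expression solves 0 = -Δ_dφ_ω + ωφ_ω - |φ_ω|⁶φ_ω. Then there exist ω₁ > 0 and constants 0 < c ≤ K such that for all ω > ω₁ and all x ∈ ℤ: c·ω^{1/6 - |x|} ≤ |φ_ω(x)| ≤ K·ω^{1/6 - |x|} (sharp exponential decay of the soliton). -/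
noncomputable section

open scoped BigOperators ENNReal
open MeasureTheory Complex Filter

/-- **Sharp exponential decay of the soliton** (Remark A.2):
`|φ_ω(x)| ∼ ω^{1/6 - |x|}` for large `ω`, uniformly in `x`. -/
theorem soliton_sharp_decay (ε : ℝ) (hε : 0 < ε) (ψ : ℝ → LinfN)
    (hψ : AnalyticOnNhd ℝ ψ (Set.Ioo (-ε) ε))
    (hψ0 : ψ 0 0 = 1 / 3)
    (hψ1 : ∀ j : ℕ, 1 ≤ j → ψ 0 j = 1)
    (hsol : ∀ ω : ℝ, 1 / ε < ω → ∀ x : ℤ,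
      (0 : ℝ) = -(lapR (phiOf ψ ω) x) + ω * phiOf ψ ω x
        - |phiOf ψ ω x| ^ 6 * phiOf ψ ω x) :
    ∃ ω₁ c K : ℝ, 0 < ω₁ ∧ 0 < c ∧ c ≤ K ∧
      ∀ ω : ℝ, ω₁ < ω → ∀ x : ℤ,
        c * ω ^ ((1 : ℝ) / 6 - |(x : ℝ)|) ≤ |phiOf ψ ω x| ∧
        |phiOf ψ ω x| ≤ K * ω ^ ((1 : ℝ) / 6 - |(x : ℝ)|) := by
  have h0mem : (0 : ℝ) ∈ Set.Ioo (-ε) ε := ⟨by linarith, hε⟩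
  have hcont : ContinuousAt ψ 0 := (hψ 0 h0mem).continuousAt
  obtain ⟨δ, hδpos, hδ2⟩ := Metric.continuousAt_iff.1 hcont (1 / 2) (by norm_num)
  refine ⟨max (1 / δ) 2, 1 / 2, 3 / 2, lt_of_lt_of_le (by norm_num) (le_max_right _ _),
    by norm_num, by norm_num, ?_⟩
  intro ω hω x
  have hω2 : (2 : ℝ) < ω := lt_of_le_of_lt (le_max_right _ _) hω
  have hωpos : (0 : ℝ) < ω := by linarith
  have hωδ : 1 / δ < ω := lt_of_le_of_lt (le_max_left _ _) hω
  have hinvδ : ω⁻¹ < δ := by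
    rw [inv_lt_comm₀ hωpos hδpos]; simpa [one_div] using hωδ
  have hnear : ‖ψ ω⁻¹ - ψ 0‖ < 1 / 2 := by
    have := hδ2 (x := ω⁻¹) (by
      simp only [Real.dist_eq, sub_zero]
      rwa [abs_of_pos (by positivity)])
    rwa [dist_eq_norm] at this
  have hcoord : ∀ j : ℕ, |ψ ω⁻¹ j - ψ 0 j| ≤ ‖ψ ω⁻¹ - ψ 0‖ := by
    intro j
    have h := lp.norm_apply_le_norm (p := (⊤ : ℝ≥0∞)) (by simp) (ψ ω⁻¹ - ψ 0) j
    have hc : (ψ ω⁻¹ - ψ 0) j = ψ ω⁻¹ j - ψ 0 j := by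
      rw [lp.coeFn_sub]; rfl
    rwa [hc, Real.norm_eq_abs] at h
  have hpow : ∀ j : ℕ, ω ^ ((1 : ℝ) / 6 - (j : ℝ)) = ω ^ ((1 : ℝ) / 6) * ω ^ (-(j : ℝ)) := by
    intro j
    rw [← Real.rpow_add hωpos]; ring_nf
  have hcastAbs : ∀ y : ℤ, ((y.natAbs : ℝ)) = |(y : ℝ)| := by
    intro y; push_cast [Nat.cast_natAbs]; ring
  by_cases hx : x = 0
  · -- center site
    subst hx
    have habs0 : |(0 : ℤ) ^ 1| = 0 := by norm_num
    have hval : phiOf ψ ω 0 = ω ^ ((1 : ℝ) / 6) * (1 + ω⁻¹ * ψ ω⁻¹ 0) := by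
      simp [phiOf]
    have hψb : |ψ ω⁻¹ 0| ≤ 5 / 6 := by
      have h1 := hcoord 0
      have := hnear
      have : |ψ ω⁻¹ 0 - ψ 0 0| ≤ 1 / 2 := le_of_lt (lt_of_le_of_lt h1 hnear)
      rw [hψ0] at this
      cases abs_le.1 this with
      | intro hl hr => rw [abs_le]; constructor <;> linarith
    have hsmall : |ω⁻¹ * ψ ω⁻¹ 0| ≤ 5 / 12 := by
      rw [abs_mul, abs_of_pos (show (0:ℝ) < ω⁻¹ by positivity)]
      have hinv2 : ω⁻¹ ≤ 1 / 2 := by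
        rw [inv_le_comm₀ hωpos (by norm_num)]; linarith
      calc ω⁻¹ * |ψ ω⁻¹ 0| ≤ (1 / 2) * (5 / 6) := by
            apply mul_le_mul hinv2 hψb (abs_nonneg _) (by norm_num)
        _ = 5 / 12 := by norm_num
    obtain ⟨hl, hr⟩ := abs_le.1 hsmall
    have hfac_lo : (1 / 2 : ℝ) ≤ 1 + ω⁻¹ * ψ ω⁻¹ 0 := by linarith
    have hfac_hi : |1 + ω⁻¹ * ψ ω⁻¹ 0| ≤ 3 / 2 := by
      rw [abs_le]; constructor <;> linarith
    have hxabs : |((0 : ℤ) : ℝ)| = 0 := by norm_num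
    rw [hval, hxabs, sub_zero, abs_mul,
      abs_of_pos (Real.rpow_pos_of_pos hωpos _)]
    constructor
    · rw [mul_comm (1/2 : ℝ)]
      apply mul_le_mul_of_nonneg_left _ (le_of_lt (Real.rpow_pos_of_pos hωpos _))
      calc (1 / 2 : ℝ) ≤ 1 + ω⁻¹ * ψ ω⁻¹ 0 := hfac_lo
        _ ≤ |1 + ω⁻¹ * ψ ω⁻¹ 0| := le_abs_self _
    · rw [mul_comm (3/2 : ℝ)]
      exact mul_le_mul_of_nonneg_left hfac_hi (le_of_lt (Real.rpow_pos_of_pos hωpos _))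
  · -- off-center sites
    have hj1 : 1 ≤ x.natAbs := by
      rcases Nat.eq_zero_or_pos x.natAbs with h | h
      · exact absurd (Int.natAbs_eq_zero.1 h) hx
      · exact h
    have hψbnd : |ψ ω⁻¹ x.natAbs - 1| ≤ 1 / 2 := by
      have h1 := hcoord x.natAbs
      rw [hψ1 x.natAbs hj1] at h1
      exact le_of_lt (lt_of_le_of_lt h1 hnear)
    obtain ⟨hl, hr⟩ := abs_le.1 hψbnd
    have hfac_lo : (1 / 2 : ℝ) ≤ ψ ω⁻¹ x.natAbs := by linarith
    have hfac_hi : |ψ ω⁻¹ x.natAbs| ≤ 3 / 2 := by rw [abs_le]; constructor <;> linarith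
    have hval : phiOf ψ ω x = ω ^ ((1 : ℝ) / 6) * (ω ^ (-(x.natAbs : ℝ)) * ψ ω⁻¹ x.natAbs) := by
      simp [phiOf, hx]
    have hsplit : ω ^ ((1 : ℝ) / 6 - |(x : ℝ)|)
        = ω ^ ((1 : ℝ) / 6) * ω ^ (-(x.natAbs : ℝ)) := by
      rw [← hcastAbs x, ← hpow x.natAbs]
    rw [hval, hsplit, abs_mul, abs_mul,
      abs_of_pos (Real.rpow_pos_of_pos hωpos ((1:ℝ)/6)),
      abs_of_pos (Real.rpow_pos_of_pos hωpos (-(x.natAbs : ℝ)))]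
    have hwpos : (0 : ℝ) < ω ^ ((1 : ℝ) / 6) * ω ^ (-(x.natAbs : ℝ)) := by
      exact mul_pos (Real.rpow_pos_of_pos hωpos _) (Real.rpow_pos_of_pos hωpos _)
    constructor
    · rw [mul_comm (1/2 : ℝ), mul_assoc]
      apply mul_le_mul_of_nonneg_left _ (le_of_lt (Real.rpow_pos_of_pos hωpos _))
      apply mul_le_mul_of_nonneg_left _ (le_of_lt (Real.rpow_pos_of_pos hωpos _))
      calc (1 / 2 : ℝ) ≤ ψ ω⁻¹ x.natAbs := hfac_lo
        _ ≤ |ψ ω⁻¹ x.natAbs| := le_abs_self _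
    · rw [mul_comm (3/2 : ℝ), mul_assoc]
      apply mul_le_mul_of_nonneg_left _ (le_of_lt (Real.rpow_pos_of_pos hωpos _))
      exact mul_le_mul_of_nonneg_left hfac_hi (le_of_lt (Real.rpow_pos_of_pos hωpos _))

end
end
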